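/- Let M ∈ ℝ^{n×n} and V ∈ ℝ^{n×d}, and let S ∈ ℝ^{m×n} be a random sampling matrix where each row is independently e_{ℓ}ᵀ·‖V‖_F/(√m·‖V_{ℓ,:}‖₂) with ℓ sampled with probability ‖V_{ℓ,:}‖₂²/‖V‖_F². Then E[M Sᵀ S V] = M V and E[‖M Sᵀ S V − M V‖_F²] ≤ (1/m)·‖M‖_F²·‖V‖_F². -/

import Mathlib

open scoped Classical
open Matrix

/-- Squared Frobenius norm. -/
def frobSq {m n : ℕ} (M : Matrix (Fin m) (Fin n) ℝ) : ℝ :=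
  ∑ i, ∑ j, (M i j) ^ 2

/-- Squared Euclidean norm of the `ℓ`-th row of `V`. -/
def rowSq {n d : ℕ} (V : Matrix (Fin n) (Fin d) ℝ) (ℓ : Fin n) : ℝ :=
  ∑ j, (V ℓ j) ^ 2

/-- The length-squared sampling matrix determined by a sample `ω` of row
indices: row `r` is `e_{ω r}ᵀ · ‖V‖_F / (√m · ‖V_{ω r,:}‖₂)`. -/
noncomputable def sampMatrix {n d m : ℕ} (V : Matrix (Fin n) (Fin d) ℝ)
    (ω : Fin m → Fin n) : Matrix (Fin m) (Fin n) ℝ :=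
  Matrix.of fun r j =>
    if j = ω r then Real.sqrt (frobSq V) / (Real.sqrt m * Real.sqrt (rowSq V (ω r)))
    else 0

lemma rowSq_nonneg {n d : ℕ} (V : Matrix (Fin n) (Fin d) ℝ) (ℓ : Fin n) :
    0 ≤ rowSq V ℓ := Finset.sum_nonneg fun _ _ => sq_nonneg _

lemma frobSq_nonneg {m n : ℕ} (M : Matrix (Fin m) (Fin n) ℝ) :
    0 ≤ frobSq M := Finset.sum_nonneg fun _ _ => Finset.sum_nonneg fun _ _ => sq_nonneg _

lemma sum_pi_prod {m n : ℕ} (h : Fin m → Fin n → ℝ) :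
    ∑ ω : Fin m → Fin n, ∏ r, h r (ω r) = ∏ r, ∑ ℓ, h r ℓ := by
  rw [Finset.prod_univ_sum, Fintype.piFinset_univ]

lemma expval {m n : ℕ} (s : Fin m) (p f : Fin n → ℝ) (hp : ∑ ℓ, p ℓ = 1) :
    ∑ ω : Fin m → Fin n, (∏ r, p (ω r)) * f (ω s) = ∑ ℓ, p ℓ * f ℓ := by
  have h1 : ∀ ω : Fin m → Fin n, (∏ r, p (ω r)) * f (ω s)
      = ∏ r, (p (ω r) * (if r = s then f (ω r) else 1)) := by
    intro ω
    rw [Finset.prod_mul_distrib, Finset.prod_ite_eq' Finset.univ s (fun r => f (ω r))]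
    simp
  simp_rw [h1]
  rw [sum_pi_prod (fun r x => p x * (if r = s then f x else 1))]
  have h2 : ∀ r : Fin m, (∑ ℓ, p ℓ * (if r = s then f ℓ else 1))
      = if r = s then ∑ ℓ, p ℓ * f ℓ else 1 := by
    intro r
    split_ifs with h <;> simp [hp]
  simp_rw [h2]
  rw [Finset.prod_ite_eq' Finset.univ s (fun _ => ∑ ℓ, p ℓ * f ℓ)]
  simp

lemma expval2 {m n : ℕ} (s t : Fin m) (hst : s ≠ t) (p f g : Fin n → ℝ)
    (hp : ∑ ℓ, p ℓ = 1) :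
    ∑ ω : Fin m → Fin n, (∏ r, p (ω r)) * (f (ω s) * g (ω t))
      = (∑ ℓ, p ℓ * f ℓ) * (∑ ℓ, p ℓ * g ℓ) := by
  have h1 : ∀ ω : Fin m → Fin n, (∏ r, p (ω r)) * (f (ω s) * g (ω t))
      = ∏ r, (p (ω r) * ((if r = s then f (ω r) else 1) * (if r = t then g (ω r) else 1))) := by
    intro ω
    simp_rw [Finset.prod_mul_distrib]
    rw [Finset.prod_ite_eq' Finset.univ s (fun r => f (ω r)),
        Finset.prod_ite_eq' Finset.univ t (fun r => g (ω r))]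
    simp [mul_assoc]
  simp_rw [h1]
  rw [sum_pi_prod (fun r x => p x * ((if r = s then f x else 1) * (if r = t then g x else 1)))]
  have h2 : ∀ r : Fin m, (∑ ℓ, p ℓ * ((if r = s then f ℓ else 1) * (if r = t then g ℓ else 1)))
      = (if r = s then ∑ ℓ, p ℓ * f ℓ else 1) * (if r = t then ∑ ℓ, p ℓ * g ℓ else 1) := by
    intro r
    rcases eq_or_ne r s with h | h
    · subst h
      simp [hst, hp]
    · rcases eq_or_ne r t with h' | h'
      · subst h'
        simp [h, hp]
      · simp [h, h', hp]
  simp_rw [h2]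
  rw [Finset.prod_mul_distrib,
      Finset.prod_ite_eq' Finset.univ s (fun _ => ∑ ℓ, p ℓ * f ℓ),
      Finset.prod_ite_eq' Finset.univ t (fun _ => ∑ ℓ, p ℓ * g ℓ)]
  simp

lemma var_bound {m n : ℕ} (hm : 0 < m) (p q : Fin n → ℝ) (hp : ∑ ℓ, p ℓ = 1) :
    ∑ ω : Fin m → Fin n, (∏ r, p (ω r)) *
        ((∑ r, (1/(m:ℝ)) * q (ω r)) - ∑ ℓ, p ℓ * q ℓ)^2
      ≤ (1/(m:ℝ)) * ∑ ℓ, p ℓ * (q ℓ)^2 := by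
  have hmne : (m:ℝ) ≠ 0 := Nat.cast_ne_zero.mpr hm.ne'
  set μ := ∑ ℓ, p ℓ * q ℓ with hμ
  set f : Fin n → ℝ := fun ℓ => q ℓ - μ with hf
  have hfz : ∑ ℓ, p ℓ * f ℓ = 0 := by
    have h1 : ∀ ℓ, p ℓ * f ℓ = p ℓ * q ℓ - μ * p ℓ := by intro ℓ; rw [hf]; ring
    simp_rw [h1]
    rw [Finset.sum_sub_distrib, ← Finset.mul_sum, hp, ← hμ]
    ring
  have key : ∀ ω : Fin m → Fin n,
      (∑ r, (1/(m:ℝ)) * q (ω r)) - μ = (1/(m:ℝ)) * ∑ r, f (ω r) := by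
    intro ω
    have h1 : ∑ r : Fin m, f (ω r) = (∑ r, q (ω r)) - m * μ := by
      rw [hf]
      rw [Finset.sum_sub_distrib, Finset.sum_const, Finset.card_univ, Fintype.card_fin,
        nsmul_eq_mul]
    rw [h1, ← Finset.mul_sum]
    field_simp
  have expand : ∀ ω : Fin m → Fin n,
      (∏ r, p (ω r)) * ((∑ r, (1/(m:ℝ)) * q (ω r)) - μ)^2
      = (1/(m:ℝ)^2) * ∑ s, ∑ t, (∏ r, p (ω r)) * (f (ω s) * f (ω t)) := by
    intro ω
    rw [key ω, mul_pow, pow_two (∑ r, f (ω r)), Finset.sum_mul_sum]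
    rw [mul_left_comm]
    congr 1
    · ring
    rw [Finset.mul_sum]
    refine Finset.sum_congr rfl fun s _ => ?_
    rw [Finset.mul_sum]
  simp_rw [expand]
  rw [← Finset.mul_sum]
  have swap : ∑ ω : Fin m → Fin n, ∑ s, ∑ t, (∏ r, p (ω r)) * (f (ω s) * f (ω t))
      = ∑ s, ∑ t, ∑ ω : Fin m → Fin n, (∏ r, p (ω r)) * (f (ω s) * f (ω t)) := by
    rw [Finset.sum_comm]
    refine Finset.sum_congr rfl fun s _ => ?_
    rw [Finset.sum_comm]
  rw [swap]
  have inner : ∀ s t : Fin m, (∑ ω : Fin m → Fin n, (∏ r, p (ω r)) * (f (ω s) * f (ω t)))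
      = if s = t then ∑ ℓ, p ℓ * (f ℓ)^2 else 0 := by
    intro s t
    split_ifs with h
    · subst h
      have h2 : ∀ ω : Fin m → Fin n, (∏ r, p (ω r)) * (f (ω s) * f (ω s))
          = (∏ r, p (ω r)) * (f (ω s))^2 := by intro ω; ring
      simp_rw [h2]
      exact expval s p (fun ℓ => (f ℓ)^2) hp
    · rw [expval2 s t h p f f hp, hfz, mul_zero]
  simp_rw [inner]
  have collapse : ∀ s : Fin m, (∑ t : Fin m, if s = t then ∑ ℓ, p ℓ * (f ℓ)^2 else 0)
      = ∑ ℓ, p ℓ * (f ℓ)^2 := by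
    intro s
    rw [Finset.sum_ite_eq Finset.univ s (fun _ => ∑ ℓ, p ℓ * (f ℓ)^2)]
    simp
  simp_rw [collapse]
  rw [Finset.sum_const, Finset.card_univ, Fintype.card_fin, nsmul_eq_mul]
  have hle : ∑ ℓ, p ℓ * (f ℓ)^2 ≤ ∑ ℓ, p ℓ * (q ℓ)^2 := by
    have h1 : ∀ ℓ, p ℓ * (f ℓ)^2 = p ℓ * (q ℓ)^2 - 2*μ*(p ℓ * q ℓ) + μ^2 * p ℓ := by
      intro ℓ; rw [hf]; ring
    simp_rw [h1]
    rw [Finset.sum_add_distrib, Finset.sum_sub_distrib, ← Finset.mul_sum,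
      ← Finset.mul_sum, hp, ← hμ]
    nlinarith [sq_nonneg μ]
  have heq : 1/(m:ℝ)^2 * ((m:ℝ) * ∑ ℓ, p ℓ * (f ℓ)^2)
      = 1/(m:ℝ) * ∑ ℓ, p ℓ * (f ℓ)^2 := by
    field_simp
  rw [heq]
  exact mul_le_mul_of_nonneg_left hle (by positivity)

lemma samp_entry {n d m : ℕ} (hm : 0 < m)
    (M : Matrix (Fin n) (Fin n) ℝ) (V : Matrix (Fin n) (Fin d) ℝ)
    (ω : Fin m → Fin n) (i : Fin n) (j : Fin d) :
    (M * (sampMatrix V ω)ᵀ * sampMatrix V ω * V) i j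
      = ∑ r, (1/(m:ℝ)) * ((frobSq V / rowSq V (ω r)) * (M i (ω r) * V (ω r) j)) := by
  set c : Fin m → ℝ := fun r =>
    Real.sqrt (frobSq V) / (Real.sqrt m * Real.sqrt (rowSq V (ω r))) with hc
  have hMS : ∀ r, (M * (sampMatrix V ω)ᵀ) i r = M i (ω r) * c r := by
    intro r
    simp only [Matrix.mul_apply, Matrix.transpose_apply, sampMatrix, Matrix.of_apply,
      mul_ite, mul_zero]
    simp
    exact Or.inl rfl
  have h1 : ∀ b, (M * (sampMatrix V ω)ᵀ * sampMatrix V ω) i b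
      = ∑ r, (M i (ω r) * c r) * (if b = ω r then c r else 0) := by
    intro b
    rw [Matrix.mul_apply]
    refine Finset.sum_congr rfl fun r _ => ?_
    rw [hMS r]
    rfl
  have h2 : (M * (sampMatrix V ω)ᵀ * sampMatrix V ω * V) i j
      = ∑ r, (M i (ω r) * c r) * (c r * V (ω r) j) := by
    simp only [Matrix.mul_apply, h1, Finset.sum_mul]
    rw [Finset.sum_comm]
    congr 1
    ext r
    simp [ite_mul, mul_assoc]
  rw [h2]
  refine Finset.sum_congr rfl fun r _ => ?_
  have hcc : c r * c r = frobSq V / ((m : ℝ) * rowSq V (ω r)) := by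
    rw [hc]
    rw [div_mul_div_comm, Real.mul_self_sqrt (frobSq_nonneg V)]
    congr 1
    rw [mul_mul_mul_comm, Real.mul_self_sqrt (Nat.cast_nonneg m),
      Real.mul_self_sqrt (rowSq_nonneg V _)]
  have h3 : M i (ω r) * c r * (c r * V (ω r) j)
      = (c r * c r) * (M i (ω r) * V (ω r) j) := by ring
  rw [h3, hcc]
  ring

/-- Length-squared sampling is unbiased and has Frobenius variance at most
`‖M‖_F²·‖V‖_F²/m`: with each of the `m` rows sampled independently with
probability proportional to the squared row norms of `V`,
`E[M Sᵀ S V] = M V` and `E[‖M Sᵀ S V − M V‖_F²] ≤ ‖M‖_F²‖V‖_F²/m`. -/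
theorem lengthSquaredSampling_unbiased_and_variance {n d m : ℕ}
    (hm : 0 < m)
    (M : Matrix (Fin n) (Fin n) ℝ) (V : Matrix (Fin n) (Fin d) ℝ)
    (hV : ∀ ℓ, rowSq V ℓ ≠ 0) :
    (∑ ω : (Fin m → Fin n), (∏ r, rowSq V (ω r) / frobSq V) •
        (M * (sampMatrix V ω)ᵀ * sampMatrix V ω * V) = M * V) ∧
    (∑ ω : (Fin m → Fin n), (∏ r, rowSq V (ω r) / frobSq V) *
        frobSq (M * (sampMatrix V ω)ᵀ * sampMatrix V ω * V - M * V)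
      ≤ (1 / m) * frobSq M * frobSq V) := by
  rcases Nat.eq_zero_or_pos n with hn | hn
  · subst hn
    haveI : IsEmpty (Fin m → Fin 0) := ⟨fun ω => (ω ⟨0, hm⟩).elim0⟩
    constructor
    · rw [Finset.univ_eq_empty, Finset.sum_empty]
      ext i j
      exact i.elim0
    · rw [Finset.univ_eq_empty, Finset.sum_empty]
      have : frobSq M = 0 := by
        simp [frobSq]
      rw [this, mul_zero, zero_mul]
  · have hmne : (m:ℝ) ≠ 0 := Nat.cast_ne_zero.mpr hm.ne'
    have hrowpos : ∀ ℓ, 0 < rowSq V ℓ :=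
      fun ℓ => (rowSq_nonneg V ℓ).lt_of_ne (Ne.symm (hV ℓ))
    have hFrow : frobSq V = ∑ ℓ, rowSq V ℓ := rfl
    have hF : 0 < frobSq V := by
      rw [hFrow]
      exact Finset.sum_pos (fun ℓ _ => hrowpos ℓ) ⟨⟨0, hn⟩, Finset.mem_univ _⟩
    set p : Fin n → ℝ := fun ℓ => rowSq V ℓ / frobSq V with hpdef
    have hp : ∑ ℓ, p ℓ = 1 := by
      rw [hpdef]
      rw [← Finset.sum_div, ← hFrow, div_self hF.ne']
    have hμ : ∀ (i : Fin n) (j : Fin d), (M * V) i j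
        = ∑ ℓ, p ℓ * (frobSq V / rowSq V ℓ * (M i ℓ * V ℓ j)) := by
      intro i j
      rw [Matrix.mul_apply]
      refine Finset.sum_congr rfl fun ℓ _ => ?_
      rw [hpdef]
      field_simp [hV ℓ, hF.ne']
    constructor
    · ext i j
      simp only [Matrix.sum_apply, Matrix.smul_apply, smul_eq_mul]
      have hentry : ∀ ω : Fin m → Fin n,
          (∏ r, rowSq V (ω r) / frobSq V) *
            (M * (sampMatrix V ω)ᵀ * sampMatrix V ω * V) i j
          = ∑ s : Fin m, (1/(m:ℝ)) *
              ((∏ r, p (ω r)) * (frobSq V / rowSq V (ω s) * (M i (ω s) * V (ω s) j))) := by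
        intro ω
        rw [samp_entry hm M V ω i j, Finset.mul_sum]
        refine Finset.sum_congr rfl fun s _ => ?_
        ring
      simp_rw [hentry]
      rw [Finset.sum_comm]
      have hs : ∀ s : Fin m,
          ∑ ω : Fin m → Fin n, (1/(m:ℝ)) *
              ((∏ r, p (ω r)) * (frobSq V / rowSq V (ω s) * (M i (ω s) * V (ω s) j)))
          = (1/(m:ℝ)) * (M * V) i j := by
        intro s
        rw [← Finset.mul_sum,
          expval s p (fun ℓ => frobSq V / rowSq V ℓ * (M i ℓ * V ℓ j)) hp, ← hμ i j]
      simp_rw [hs]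
      rw [Finset.sum_const, Finset.card_univ, Fintype.card_fin, nsmul_eq_mul]
      field_simp
    · have hdiff : ∀ (ω : Fin m → Fin n) (i : Fin n) (j : Fin d),
          (M * (sampMatrix V ω)ᵀ * sampMatrix V ω * V - M * V) i j
          = (∑ r, (1/(m:ℝ)) * ((frobSq V / rowSq V (ω r)) * (M i (ω r) * V (ω r) j)))
            - ∑ ℓ, p ℓ * (frobSq V / rowSq V ℓ * (M i ℓ * V ℓ j)) := by
        intro ω i j
        rw [Matrix.sub_apply, samp_entry hm M V ω i j, hμ i j]
      have step1 : ∑ ω : (Fin m → Fin n), (∏ r, rowSq V (ω r) / frobSq V) *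
            frobSq (M * (sampMatrix V ω)ᵀ * sampMatrix V ω * V - M * V)
          = ∑ i : Fin n, ∑ j : Fin d, ∑ ω : Fin m → Fin n, (∏ r, p (ω r)) *
              ((∑ r, (1/(m:ℝ)) * ((frobSq V / rowSq V (ω r)) * (M i (ω r) * V (ω r) j)))
                - ∑ ℓ, p ℓ * (frobSq V / rowSq V ℓ * (M i ℓ * V ℓ j)))^2 := by
        have h1 : ∀ ω : Fin m → Fin n, (∏ r, rowSq V (ω r) / frobSq V) *
              frobSq (M * (sampMatrix V ω)ᵀ * sampMatrix V ω * V - M * V)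
            = ∑ i : Fin n, ∑ j : Fin d, (∏ r, p (ω r)) *
                ((∑ r, (1/(m:ℝ)) * ((frobSq V / rowSq V (ω r)) * (M i (ω r) * V (ω r) j)))
                  - ∑ ℓ, p ℓ * (frobSq V / rowSq V ℓ * (M i ℓ * V ℓ j)))^2 := by
          intro ω
          rw [show frobSq (M * (sampMatrix V ω)ᵀ * sampMatrix V ω * V - M * V)
            = ∑ i, ∑ j, ((M * (sampMatrix V ω)ᵀ * sampMatrix V ω * V - M * V) i j)^2 from rfl,
            Finset.mul_sum]
          refine Finset.sum_congr rfl fun i _ => ?_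
          rw [Finset.mul_sum]
          refine Finset.sum_congr rfl fun j _ => ?_
          rw [hdiff ω i j]
        simp_rw [h1]
        rw [Finset.sum_comm]
        refine Finset.sum_congr rfl fun i _ => ?_
        rw [Finset.sum_comm]
      rw [step1]
      have step2 : ∑ i : Fin n, ∑ j : Fin d, ∑ ω : Fin m → Fin n, (∏ r, p (ω r)) *
              ((∑ r, (1/(m:ℝ)) * ((frobSq V / rowSq V (ω r)) * (M i (ω r) * V (ω r) j)))
                - ∑ ℓ, p ℓ * (frobSq V / rowSq V ℓ * (M i ℓ * V ℓ j)))^2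
          ≤ ∑ i : Fin n, ∑ j : Fin d, (1/(m:ℝ)) *
              ∑ ℓ, p ℓ * (frobSq V / rowSq V ℓ * (M i ℓ * V ℓ j))^2 := by
        refine Finset.sum_le_sum fun i _ => Finset.sum_le_sum fun j _ => ?_
        exact var_bound hm p (fun ℓ => frobSq V / rowSq V ℓ * (M i ℓ * V ℓ j)) hp
      refine le_trans step2 (le_of_eq ?_)
      have hterm : ∀ (i : Fin n) (j : Fin d) (ℓ : Fin n),
          p ℓ * (frobSq V / rowSq V ℓ * (M i ℓ * V ℓ j))^2
          = (frobSq V / rowSq V ℓ) * ((M i ℓ)^2 * (V ℓ j)^2) := by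
        intro i j ℓ
        rw [hpdef]
        field_simp [hV ℓ, hF.ne']
      simp_rw [hterm]
      have hinner : ∀ i : Fin n,
          ∑ j : Fin d, (1/(m:ℝ)) *
            ∑ ℓ, (frobSq V / rowSq V ℓ) * ((M i ℓ)^2 * (V ℓ j)^2)
          = (1/(m:ℝ)) * ∑ ℓ, frobSq V * (M i ℓ)^2 := by
        intro i
        rw [← Finset.mul_sum]
        congr 1
        rw [Finset.sum_comm]
        refine Finset.sum_congr rfl fun ℓ _ => ?_
        have : ∑ j : Fin d, frobSq V / rowSq V ℓ * ((M i ℓ)^2 * (V ℓ j)^2)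
            = (frobSq V / rowSq V ℓ) * (M i ℓ)^2 * ∑ j, (V ℓ j)^2 := by
          rw [Finset.mul_sum]
          refine Finset.sum_congr rfl fun j _ => ?_
          ring
        rw [this]
        rw [show (∑ j, (V ℓ j)^2) = rowSq V ℓ from rfl]
        field_simp [hV ℓ]
      simp_rw [hinner]
      rw [← Finset.mul_sum]
      have hfin : ∑ i : Fin n, ∑ ℓ : Fin n, frobSq V * (M i ℓ)^2
          = frobSq V * frobSq M := by
        rw [show frobSq M = ∑ i, ∑ j, (M i j)^2 from rfl, Finset.mul_sum]
        refine Finset.sum_congr rfl fun i _ => ?_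
        rw [Finset.mul_sum]
      rw [hfin]
      ring
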